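/- The function h defined by h(x,y,d) = inf{ g(ξ,η,d) : ξ ≥ x, η ≥ y } is continuous on the set Ō = {(x,y,d) ∈ ℝ³ : x ≥ 0, y ≥ 0, xy ≥ |d|}. -/

import Mathlib

noncomputable section

def Afun (l x y d : ℝ) : ℝ :=
  (x ^ 2 + y ^ 2) * (l ^ 2 + 1 / l ^ 2) / 2
    + (l ^ 2 - 1 / l ^ 2) * Real.sqrt (x ^ 2 * y ^ 2 - d ^ 2) + 2 * d

def gfun (l x y d : ℝ) : ℝ :=
  x ^ 2 + y ^ 2 + (l ^ 2 + 1 / l ^ 2) - 2 * Real.sqrt (Afun l x y d)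

def hfun (l x y d : ℝ) : ℝ :=
  sInf {r | ∃ ξ η : ℝ, x ≤ ξ ∧ y ≤ η ∧ r = gfun l ξ η d}

lemma my_sqrt_add_le (a b : ℝ) (ha : 0 ≤ a) (hb : 0 ≤ b) :
    Real.sqrt (a + b) ≤ Real.sqrt a + Real.sqrt b := by
  have h : a + b ≤ (Real.sqrt a + Real.sqrt b) ^ 2 := by
    have := Real.sq_sqrt ha
    have := Real.sq_sqrt hb
    nlinarith [mul_nonneg (Real.sqrt_nonneg a) (Real.sqrt_nonneg b)]
  calc Real.sqrt (a + b) ≤ Real.sqrt ((Real.sqrt a + Real.sqrt b) ^ 2) :=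
        Real.sqrt_le_sqrt h
    _ = Real.sqrt a + Real.sqrt b := Real.sqrt_sq (by positivity)

lemma my_abs_sqrt_sub (a b : ℝ) : |Real.sqrt a - Real.sqrt b| ≤ Real.sqrt |a - b| := by
  wlog hab : b ≤ a generalizing a b
  · rw [abs_sub_comm, abs_sub_comm a b]; exact this b a (le_of_not_ge hab)
  have hs : Real.sqrt b ≤ Real.sqrt a := Real.sqrt_le_sqrt hab
  rw [abs_of_nonneg (by linarith), abs_of_nonneg (by linarith)]
  rcases le_or_gt b 0 with hb | hb
  · have : Real.sqrt a ≤ Real.sqrt (a - b) := Real.sqrt_le_sqrt (by linarith)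
    have := Real.sqrt_nonneg b
    linarith
  · have : Real.sqrt a ≤ Real.sqrt b + Real.sqrt (a - b) := by
      have := my_sqrt_add_le b (a - b) hb.le (by linarith)
      simpa using this
    linarith

section lemmas

variable {l : ℝ} (hl : 1 < l)
include hl

lemma hl0 : (0:ℝ) < l := lt_trans one_pos hl

lemma M_nonneg : 0 ≤ l ^ 2 - 1 / l ^ 2 := by
  have h0 : (0:ℝ) < l := lt_trans one_pos hl
  have h1 : (1:ℝ) ≤ l ^ 2 := by nlinarith
  have : 1 / l ^ 2 ≤ 1 := by
    rw [div_le_one (by positivity)]; exact h1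
  linarith

lemma L_pos : 0 < l ^ 2 + 1 / l ^ 2 := by
  have h0 : (0:ℝ) < l := lt_trans one_pos hl
  positivity

/-- monotonicity of A in x and y for nonneg coordinates -/
lemma Afun_mono {x x' y y' d : ℝ} (hx0 : 0 ≤ x) (hx : x ≤ x') (hy0 : 0 ≤ y) (hy : y ≤ y') :
    Afun l x y d ≤ Afun l x' y' d := by
  have hM := M_nonneg hl
  have hL := L_pos hl
  have h1 : x ^ 2 ≤ x' ^ 2 := by nlinarith
  have h2 : y ^ 2 ≤ y' ^ 2 := by nlinarith
  have h3 : Real.sqrt (x ^ 2 * y ^ 2 - d ^ 2) ≤ Real.sqrt (x' ^ 2 * y' ^ 2 - d ^ 2) := by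
    apply Real.sqrt_le_sqrt
    nlinarith
  unfold Afun
  have := mul_le_mul_of_nonneg_left h3 hM
  nlinarith

/-- key shift inequality -/
lemma gfun_shift {x x' y y' d ξ η : ℝ} (hx0 : 0 ≤ x') (hx : x' ≤ x) (hy0 : 0 ≤ y')
    (hy : y' ≤ y) (hξ : x' ≤ ξ) (hη : y' ≤ η) :
    gfun l (max ξ x) (max η y) d ≤ gfun l ξ η d + (x ^ 2 - x' ^ 2) + (y ^ 2 - y' ^ 2) := by
  have hA : Afun l ξ η d ≤ Afun l (max ξ x) (max η y) d :=
    Afun_mono hl (le_trans hx0 hξ) (le_max_left _ _) (le_trans hy0 hη) (le_max_left _ _)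
  have hS : Real.sqrt (Afun l ξ η d) ≤ Real.sqrt (Afun l (max ξ x) (max η y) d) :=
    Real.sqrt_le_sqrt hA
  have h1 : (max ξ x) ^ 2 ≤ ξ ^ 2 + (x ^ 2 - x' ^ 2) := by
    rcases le_total x ξ with h | h
    · rw [max_eq_left h]; nlinarith
    · rw [max_eq_right h]; nlinarith
  have h2 : (max η y) ^ 2 ≤ η ^ 2 + (y ^ 2 - y' ^ 2) := by
    rcases le_total y η with h | h
    · rw [max_eq_left h]; nlinarith
    · rw [max_eq_right h]; nlinarith
  unfold gfun
  linarith

/-- lower bound for gfun -/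
lemma gfun_lb {ξ η d : ℝ} (hξ : 0 ≤ ξ) (hη : 0 ≤ η) :
    1 / l ^ 2 - 2 * Real.sqrt (2 * |d|) ≤ gfun l ξ η d := by
  have h0 : (0:ℝ) < l := lt_trans one_pos hl
  have hM := M_nonneg hl
  set s := ξ ^ 2 + η ^ 2 with hs
  have hs0 : 0 ≤ s := by positivity
  have hA : Afun l ξ η d ≤ l ^ 2 * s + 2 * |d| := by
    have h1 : Real.sqrt (ξ ^ 2 * η ^ 2 - d ^ 2) ≤ ξ * η := by
      calc Real.sqrt (ξ ^ 2 * η ^ 2 - d ^ 2) ≤ Real.sqrt ((ξ * η) ^ 2) :=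
            Real.sqrt_le_sqrt (by nlinarith)
        _ = ξ * η := Real.sqrt_sq (by positivity)
    have h2 : (l ^ 2 - 1 / l ^ 2) * Real.sqrt (ξ ^ 2 * η ^ 2 - d ^ 2)
        ≤ (l ^ 2 - 1 / l ^ 2) * (ξ * η) := mul_le_mul_of_nonneg_left h1 hM
    have h3 : d ≤ |d| := le_abs_self d
    have h4 : 2 * (ξ * η) ≤ s := by nlinarith [sq_nonneg (ξ - η)]
    unfold Afun
    nlinarith
  have hSA : Real.sqrt (Afun l ξ η d) ≤ l * Real.sqrt s + Real.sqrt (2 * |d|) := by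
    calc Real.sqrt (Afun l ξ η d) ≤ Real.sqrt (l ^ 2 * s + 2 * |d|) :=
          Real.sqrt_le_sqrt hA
      _ ≤ Real.sqrt (l ^ 2 * s) + Real.sqrt (2 * |d|) :=
          my_sqrt_add_le _ _ (by positivity) (by positivity)
      _ = l * Real.sqrt s + Real.sqrt (2 * |d|) := by
          rw [Real.sqrt_mul (by positivity), Real.sqrt_sq h0.le]
  have hsq : (Real.sqrt s) ^ 2 = s := Real.sq_sqrt hs0
  unfold gfun
  nlinarith [sq_nonneg (Real.sqrt s - l)]

def Sset (l x y d : ℝ) : Set ℝ := {r | ∃ ξ η : ℝ, x ≤ ξ ∧ y ≤ η ∧ r = gfun l ξ η d}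

omit hl in
lemma Sset_nonempty (x y d : ℝ) : (Sset l x y d).Nonempty :=
  ⟨gfun l x y d, x, y, le_refl _, le_refl _, rfl⟩

lemma Sset_bddBelow {x y d : ℝ} (hx : 0 ≤ x) (hy : 0 ≤ y) : BddBelow (Sset l x y d) := by
  refine ⟨1 / l ^ 2 - 2 * Real.sqrt (2 * |d|), ?_⟩
  rintro r ⟨ξ, η, hξ, hη, rfl⟩
  exact gfun_lb hl (le_trans hx hξ) (le_trans hy hη)

omit hl in
lemma hfun_eq (x y d : ℝ) : hfun l x y d = sInf (Sset l x y d) := rfl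

lemma hfun_le_gfun {x y d ξ η : ℝ} (hx : 0 ≤ x) (hy : 0 ≤ y) (hξ : x ≤ ξ) (hη : y ≤ η) :
    hfun l x y d ≤ gfun l ξ η d :=
  csInf_le (Sset_bddBelow hl hx hy) ⟨ξ, η, hξ, hη, rfl⟩

/-- monotonicity of h -/
lemma hfun_mono {x x' y y' d : ℝ} (hx0 : 0 ≤ x') (hx : x' ≤ x) (hy0 : 0 ≤ y') (hy : y' ≤ y) :
    hfun l x' y' d ≤ hfun l x y d := by
  apply csInf_le_csInf (Sset_bddBelow hl hx0 hy0) (Sset_nonempty x y d)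
  rintro r ⟨ξ, η, hξ, hη, rfl⟩
  exact ⟨ξ, η, le_trans hx hξ, le_trans hy hη, rfl⟩

/-- reverse estimate -/
lemma hfun_rev {x x' y y' d : ℝ} (hx0 : 0 ≤ x') (hx : x' ≤ x) (hy0 : 0 ≤ y') (hy : y' ≤ y) :
    hfun l x y d - (x ^ 2 - x' ^ 2) - (y ^ 2 - y' ^ 2) ≤ hfun l x' y' d := by
  apply le_csInf (Sset_nonempty x' y' d)
  rintro r ⟨ξ, η, hξ, hη, rfl⟩
  have h1 := gfun_shift hl hx0 hx hy0 hy hξ hη (d := d)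
  have h2 : hfun l x y d ≤ gfun l (max ξ x) (max η y) d :=
    hfun_le_gfun hl (le_trans hx0 hx) (le_trans hy0 hy) (le_max_right _ _) (le_max_right _ _)
  linarith

/-- estimate in x,y -/
lemma hfun_xy_est {x x' y y' d : ℝ} (hx0 : 0 ≤ x) (hx0' : 0 ≤ x') (hy0 : 0 ≤ y)
    (hy0' : 0 ≤ y') :
    |hfun l x y d - hfun l x' y' d| ≤ |x ^ 2 - x' ^ 2| + |y ^ 2 - y' ^ 2| := by
  set m := min x x' with hm
  set n := min y y' with hn
  have hm0 : 0 ≤ m := le_min hx0 hx0'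
  have hn0 : 0 ≤ n := le_min hy0 hy0'
  have k1 : x ^ 2 - m ^ 2 ≤ |x ^ 2 - x' ^ 2| := by
    rcases le_total x x' with h | h
    · rw [hm, min_eq_left h]; simp [abs_nonneg]
    · rw [hm, min_eq_right h]; exact le_abs_self _
  have k2 : x' ^ 2 - m ^ 2 ≤ |x ^ 2 - x' ^ 2| := by
    rcases le_total x x' with h | h
    · rw [hm, min_eq_left h, abs_sub_comm]; exact le_abs_self _
    · rw [hm, min_eq_right h]; simp [abs_nonneg]
  have k3 : y ^ 2 - n ^ 2 ≤ |y ^ 2 - y' ^ 2| := by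
    rcases le_total y y' with h | h
    · rw [hn, min_eq_left h]; simp [abs_nonneg]
    · rw [hn, min_eq_right h]; exact le_abs_self _
  have k4 : y' ^ 2 - n ^ 2 ≤ |y ^ 2 - y' ^ 2| := by
    rcases le_total y y' with h | h
    · rw [hn, min_eq_left h, abs_sub_comm]; exact le_abs_self _
    · rw [hn, min_eq_right h]; simp [abs_nonneg]
  have hxm : m ^ 2 ≤ x ^ 2 := pow_le_pow_left₀ hm0 (min_le_left x x') 2
  have hxm' : m ^ 2 ≤ x' ^ 2 := pow_le_pow_left₀ hm0 (min_le_right x x') 2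
  have hyn : n ^ 2 ≤ y ^ 2 := pow_le_pow_left₀ hn0 (min_le_left y y') 2
  have hyn' : n ^ 2 ≤ y' ^ 2 := pow_le_pow_left₀ hn0 (min_le_right y y') 2
  have e1u := hfun_mono hl hm0 (min_le_left x x') hn0 (min_le_left y y') (d := d)
  have e1l := hfun_rev hl hm0 (min_le_left x x') hn0 (min_le_left y y') (d := d)
  have e2u := hfun_mono hl hm0 (min_le_right x x') hn0 (min_le_right y y') (d := d)
  have e2l := hfun_rev hl hm0 (min_le_right x x') hn0 (min_le_right y y') (d := d)
  rw [abs_le]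
  constructor <;> linarith

/-- pointwise estimate in d -/
lemma gfun_d_est {ξ η d d' : ℝ} :
    |gfun l ξ η d - gfun l ξ η d'| ≤
      2 * Real.sqrt ((l ^ 2 - 1 / l ^ 2) * Real.sqrt |d ^ 2 - d' ^ 2| + 2 * |d - d'|) := by
  have hM := M_nonneg hl
  have hA : |Afun l ξ η d - Afun l ξ η d'| ≤
      (l ^ 2 - 1 / l ^ 2) * Real.sqrt |d ^ 2 - d' ^ 2| + 2 * |d - d'| := by
    have h1 : Afun l ξ η d - Afun l ξ η d' =
        (l ^ 2 - 1 / l ^ 2) * (Real.sqrt (ξ ^ 2 * η ^ 2 - d ^ 2)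
          - Real.sqrt (ξ ^ 2 * η ^ 2 - d' ^ 2)) + 2 * (d - d') := by
      unfold Afun; ring
    have h2 : |Real.sqrt (ξ ^ 2 * η ^ 2 - d ^ 2) - Real.sqrt (ξ ^ 2 * η ^ 2 - d' ^ 2)|
        ≤ Real.sqrt |d ^ 2 - d' ^ 2| := by
      have := my_abs_sqrt_sub (ξ ^ 2 * η ^ 2 - d ^ 2) (ξ ^ 2 * η ^ 2 - d' ^ 2)
      have he : |(ξ ^ 2 * η ^ 2 - d ^ 2) - (ξ ^ 2 * η ^ 2 - d' ^ 2)| = |d ^ 2 - d' ^ 2| := by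
        rw [show (ξ ^ 2 * η ^ 2 - d ^ 2) - (ξ ^ 2 * η ^ 2 - d' ^ 2) = -(d ^ 2 - d' ^ 2) by ring,
          abs_neg]
      rwa [he] at this
    calc |Afun l ξ η d - Afun l ξ η d'|
        ≤ (l ^ 2 - 1 / l ^ 2) * |Real.sqrt (ξ ^ 2 * η ^ 2 - d ^ 2)
            - Real.sqrt (ξ ^ 2 * η ^ 2 - d' ^ 2)| + 2 * |d - d'| := by
          rw [h1]
          refine le_trans (abs_add_le _ _) ?_
          rw [abs_mul, abs_mul, abs_of_nonneg hM]
          simp [abs_of_nonneg]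
      _ ≤ _ := by nlinarith [mul_le_mul_of_nonneg_left h2 hM]
  have h3 : |Real.sqrt (Afun l ξ η d) - Real.sqrt (Afun l ξ η d')|
      ≤ Real.sqrt ((l ^ 2 - 1 / l ^ 2) * Real.sqrt |d ^ 2 - d' ^ 2| + 2 * |d - d'|) :=
    le_trans (my_abs_sqrt_sub _ _) (Real.sqrt_le_sqrt hA)
  have h4 : gfun l ξ η d - gfun l ξ η d' =
      -(2 * (Real.sqrt (Afun l ξ η d) - Real.sqrt (Afun l ξ η d'))) := by
    unfold gfun; ring
  rw [h4, abs_neg, abs_mul]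
  rw [abs_of_nonneg (by norm_num : (0:ℝ) ≤ 2)]
  linarith [h3]

/-- estimate in d for h -/
lemma hfun_d_est {x y d d' : ℝ} (hx : 0 ≤ x) (hy : 0 ≤ y) :
    |hfun l x y d - hfun l x y d'| ≤
      2 * Real.sqrt ((l ^ 2 - 1 / l ^ 2) * Real.sqrt |d ^ 2 - d' ^ 2| + 2 * |d - d'|) := by
  set ω := 2 * Real.sqrt ((l ^ 2 - 1 / l ^ 2) * Real.sqrt |d ^ 2 - d' ^ 2| + 2 * |d - d'|)
    with hω
  have hsym : |d' ^ 2 - d ^ 2| = |d ^ 2 - d' ^ 2| := abs_sub_comm _ _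
  have hsym2 : |d' - d| = |d - d'| := abs_sub_comm _ _
  have key : ∀ a b : ℝ, hfun l x y a - ω ≤ hfun l x y b →
      True := fun _ _ _ => trivial
  have main : ∀ a b : ℝ,
      (∀ ξ η : ℝ, |gfun l ξ η a - gfun l ξ η b| ≤ ω) →
      hfun l x y a - ω ≤ hfun l x y b := by
    intro a b hg
    apply le_csInf (Sset_nonempty x y b)
    rintro r ⟨ξ, η, hξ, hη, rfl⟩
    have h1 : hfun l x y a ≤ gfun l ξ η a := hfun_le_gfun hl hx hy hξ hη
    have h2 := hg ξ η
    have := abs_le.mp h2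
    linarith [this.1]
  have hgd : ∀ ξ η : ℝ, |gfun l ξ η d - gfun l ξ η d'| ≤ ω := fun ξ η => gfun_d_est hl
  have hgd' : ∀ ξ η : ℝ, |gfun l ξ η d' - gfun l ξ η d| ≤ ω := by
    intro ξ η
    have := gfun_d_est hl (l := l) (ξ := ξ) (η := η) (d := d') (d' := d)
    rw [hsym, hsym2] at this
    exact this
  have h1 := main d d' hgd
  have h2 := main d' d hgd'
  rw [abs_le]
  constructor <;> linarith

end lemmas

/-- The function `h(x,y,d) = inf{ g(ξ,η,d) : ξ ≥ x, η ≥ y }` is continuous on the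
set `Ō = {(x,y,d) : x ≥ 0, y ≥ 0, xy ≥ |d|}`. -/
theorem h_continuousOn (l : ℝ) (hl : 1 < l) :
    ContinuousOn (fun p : ℝ × ℝ × ℝ => hfun l p.1 p.2.1 p.2.2)
      {p : ℝ × ℝ × ℝ | 0 ≤ p.1 ∧ 0 ≤ p.2.1 ∧ |p.2.2| ≤ p.1 * p.2.1} := by
  intro p₀ hp₀
  obtain ⟨hx₀, hy₀, -⟩ := hp₀
  set x₀ := p₀.1
  set y₀ := p₀.2.1
  set d₀ := p₀.2.2
  set s : Set (ℝ × ℝ × ℝ) := {p : ℝ × ℝ × ℝ | 0 ≤ p.1 ∧ 0 ≤ p.2.1 ∧ |p.2.2| ≤ p.1 * p.2.1}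
    with hsdef
  set B : ℝ × ℝ × ℝ → ℝ := fun p =>
    |p.1 ^ 2 - x₀ ^ 2| + |p.2.1 ^ 2 - y₀ ^ 2| +
      2 * Real.sqrt ((l ^ 2 - 1 / l ^ 2) * Real.sqrt |p.2.2 ^ 2 - d₀ ^ 2| + 2 * |p.2.2 - d₀|)
    with hB
  have hBcont : Continuous B := by
    apply Continuous.add
    apply Continuous.add
    · exact (continuous_abs.comp ((continuous_fst.pow 2).sub continuous_const))
    · exact (continuous_abs.comp (((continuous_fst.comp continuous_snd).pow 2).sub
        continuous_const))
    · apply Continuous.mul continuous_const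
      apply Real.continuous_sqrt.comp
      apply Continuous.add
      · apply Continuous.mul continuous_const
        exact Real.continuous_sqrt.comp (continuous_abs.comp
          (((continuous_snd.comp continuous_snd).pow 2).sub continuous_const))
      · exact (continuous_const.mul (continuous_abs.comp
          ((continuous_snd.comp continuous_snd).sub continuous_const)))
  have hB0 : B p₀ = 0 := by
    simp [hB, x₀, y₀, d₀]
  have hbound : ∀ p ∈ s, |hfun l p.1 p.2.1 p.2.2 - hfun l x₀ y₀ d₀| ≤ B p := by
    rintro p ⟨hx, hy, -⟩
    have t1 : |hfun l p.1 p.2.1 p.2.2 - hfun l x₀ y₀ p.2.2| ≤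
        |p.1 ^ 2 - x₀ ^ 2| + |p.2.1 ^ 2 - y₀ ^ 2| := hfun_xy_est hl hx hx₀ hy hy₀
    have t2 : |hfun l x₀ y₀ p.2.2 - hfun l x₀ y₀ d₀| ≤
        2 * Real.sqrt ((l ^ 2 - 1 / l ^ 2) * Real.sqrt |p.2.2 ^ 2 - d₀ ^ 2| + 2 * |p.2.2 - d₀|) :=
      hfun_d_est hl hx₀ hy₀
    calc |hfun l p.1 p.2.1 p.2.2 - hfun l x₀ y₀ d₀|
        ≤ |hfun l p.1 p.2.1 p.2.2 - hfun l x₀ y₀ p.2.2| +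
            |hfun l x₀ y₀ p.2.2 - hfun l x₀ y₀ d₀| := abs_sub_le _ _ _
      _ ≤ B p := by rw [hB]; dsimp only; linarith
  have hBtends : Filter.Tendsto B (nhdsWithin p₀ s) (nhds 0) := by
    have h := (hBcont.tendsto p₀).mono_left (nhdsWithin_le_nhds (s := s))
    rwa [hB0] at h
  have habs : Filter.Tendsto (fun p : ℝ × ℝ × ℝ => |hfun l p.1 p.2.1 p.2.2 - hfun l x₀ y₀ d₀|)
      (nhdsWithin p₀ s) (nhds 0) := by
    refine squeeze_zero' ?_ ?_ hBtends
    · exact Filter.Eventually.of_forall fun p => abs_nonneg _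
    · filter_upwards [self_mem_nhdsWithin] with p hp
      exact hbound p hp
  rw [ContinuousWithinAt, tendsto_iff_dist_tendsto_zero]
  simpa [Real.dist_eq] using habs
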